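/- Let X be compact metrizable totally disconnected, h a homeomorphism, and (Pₙ) an h-refined sequence of partitions with the blocks containing any point intersecting to that point. Then (X,h) is essentially minimal (has a unique minimal set) if and only if there exists a decreasing sequence of blocks Zᵢ ∈ Pᵢ (Z₀ ⊇ Z₁ ⊇ Z₂ ⊇ ⋯) such that for every i there exists nᵢ with: every block Z' ∈ P_{nᵢ} satisfies Z' ⊆ h^j(Zᵢ) for some integer j. Moreover, in that case the unique minimal set is the orbit closure of the unique point in ⋂ᵢ Zᵢ. -/

import Mathlib

def IsClopenPartition {X : Type*} [TopologicalSpace X] (P : Set (Set X)) : Prop :=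
  P.Finite ∧ (∀ Z ∈ P, Z.Nonempty ∧ IsClopen Z) ∧
    P.PairwiseDisjoint id ∧ ⋃₀ P = Set.univ

def Refines {X : Type*} (Q P : Set (Set X)) : Prop :=
  ∀ Z ∈ Q, ∃ W ∈ P, Z ⊆ W

def IsMinimalSet {X : Type*} [TopologicalSpace X] (h : X ≃ₜ X) (Z : Set X) : Prop :=
  Z.Nonempty ∧ IsClosed Z ∧ ⇑h '' Z = Z ∧
    ∀ W ⊆ Z, W.Nonempty → IsClosed W → ⇑h '' W = W → W = Z

/-- Property (EM) for a decreasing sequence of blocks `Zseq i ∈ P i`: for each `i`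
there is a level `n` all of whose blocks are contained in some `h`-power
translate of `Zseq i`. -/
def PropEM {X : Type*} [TopologicalSpace X] (h : X ≃ₜ X) (P : ℕ → Set (Set X))
    (Zseq : ℕ → Set X) : Prop :=
  (∀ i, Zseq i ∈ P i) ∧ (∀ i, Zseq (i + 1) ⊆ Zseq i) ∧
    ∀ i, ∃ n : ℕ, ∀ Z' ∈ P n, ∃ j : ℤ, Z' ⊆ ⇑(h.toEquiv ^ j) '' Zseq i

set_option linter.unusedSectionVars false

namespace Stmt19Aux

set_option linter.unusedSectionVars false

variable {X : Type*} [TopologicalSpace X] [CompactSpace X] (h : X ≃ₜ X)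

/-- the zpow of `h.toEquiv` agrees with a homeomorphism -/
lemma exists_homeo (j : ℤ) : ∃ g : X ≃ₜ X, ⇑g = ⇑(h.toEquiv ^ j) := by
  induction j using Int.induction_on with
  | zero => exact ⟨Homeomorph.refl X, rfl⟩
  | succ k ih =>
    obtain ⟨g, hg⟩ := ih
    refine ⟨g.trans h, ?_⟩
    have : (h.toEquiv ^ ((k : ℤ) + 1)) = h.toEquiv * h.toEquiv ^ (k : ℤ) := by
      rw [add_comm, zpow_add, zpow_one]
    rw [this]
    funext x
    rw [Equiv.Perm.mul_apply]
    show h (g x) = h.toEquiv ((h.toEquiv ^ (k : ℤ)) x)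
    rw [congrFun hg x]; rfl
  | pred k ih =>
    obtain ⟨g, hg⟩ := ih
    refine ⟨g.trans h.symm, ?_⟩
    have : (h.toEquiv ^ (-(k : ℤ) - 1)) = h.toEquiv⁻¹ * h.toEquiv ^ (-(k : ℤ)) := by
      rw [sub_eq_add_neg, add_comm, zpow_add, zpow_neg, zpow_one]
    rw [this]
    funext x
    rw [Equiv.Perm.mul_apply]
    show h.symm (g x) = h.toEquiv⁻¹ ((h.toEquiv ^ (-(k : ℤ))) x)
    rw [congrFun hg x]; rfl

lemma continuous_zpow (j : ℤ) : Continuous ⇑(h.toEquiv ^ j) := by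
  obtain ⟨g, hg⟩ := exists_homeo h j
  rw [← hg]; exact g.continuous

lemma isOpenMap_zpow (j : ℤ) : IsOpenMap ⇑(h.toEquiv ^ j) := by
  obtain ⟨g, hg⟩ := exists_homeo h j
  rw [← hg]; exact g.isOpenMap

lemma zpow_neg_apply (j : ℤ) (u : X) : (h.toEquiv ^ (-j)) ((h.toEquiv ^ j) u) = u := by
  simp [← Equiv.Perm.mul_apply, ← zpow_add]

/-- invariance under all integer powers -/
lemma image_zpow_eq {Y : Set X} (hY : ⇑h '' Y = Y) (j : ℤ) :
    ⇑(h.toEquiv ^ j) '' Y = Y := by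
  have hmul : ∀ (e f : Equiv.Perm X) (S : Set X), ⇑(e * f) '' S = ⇑e '' (⇑f '' S) := by
    intro e f S; rw [← Set.image_comp]; rfl
  have hinv : ⇑h.symm '' Y = Y := by
    conv_lhs => rw [← hY]
    rw [← Set.image_comp]
    simp
  induction j using Int.induction_on with
  | zero => simp
  | succ k ih =>
    have : (h.toEquiv ^ ((k : ℤ) + 1)) = h.toEquiv * h.toEquiv ^ (k : ℤ) := by
      rw [add_comm, zpow_add, zpow_one]
    rw [this, hmul, ih]
    exact hY
  | pred k ih =>
    have : (h.toEquiv ^ (-(k : ℤ) - 1)) = h.toEquiv⁻¹ * h.toEquiv ^ (-(k : ℤ)) := by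
      rw [sub_eq_add_neg, add_comm, zpow_add, zpow_neg, zpow_one]
    rw [this, hmul, ih]
    exact hinv

/-- the orbit of a point -/
def orb (z : X) : Set X := {y : X | ∃ j : ℤ, y = (h.toEquiv ^ j) z}

lemma mem_orb_self (z : X) : z ∈ orb h z := ⟨0, by simp⟩

lemma image_orb (z : X) : ⇑h '' orb h z = orb h z := by
  ext y
  constructor
  · rintro ⟨w, ⟨j, rfl⟩, rfl⟩
    refine ⟨j + 1, ?_⟩
    rw [add_comm, zpow_add, zpow_one, Equiv.Perm.mul_apply]
    rfl
  · rintro ⟨j, rfl⟩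
    refine ⟨(h.toEquiv ^ (j - 1)) z, ⟨j - 1, rfl⟩, ?_⟩
    have : (h.toEquiv ^ j) = h.toEquiv * h.toEquiv ^ (j - 1) := by
      rw [← zpow_one_add]; ring_nf
    rw [this, Equiv.Perm.mul_apply]
    rfl

lemma image_closure_orb (z : X) : ⇑h '' closure (orb h z) = closure (orb h z) := by
  rw [h.image_closure, image_orb]

/-- existence of a minimal set inside any nonempty closed invariant set -/
lemma exists_minimal (S : Set X) (hne : S.Nonempty) (hcl : IsClosed S)
    (hinv : ⇑h '' S = S) : ∃ Y ⊆ S, IsMinimalSet h Y := by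
  set 𝒮 : Set (Set X) := {Y | Y.Nonempty ∧ IsClosed Y ∧ ⇑h '' Y = Y ∧ Y ⊆ S} with h𝒮
  have key : ∀ c ⊆ 𝒮, IsChain (· ⊆ ·) c → c.Nonempty →
      ∃ lb ∈ 𝒮, ∀ s ∈ c, lb ⊆ s := by
    intro c hc hchain hcne
    haveI : Nonempty c := hcne.to_subtype
    have hdir : Directed (· ⊇ ·) (fun Y : c => (Y : Set X)) := by
      intro Y₁ Y₂
      rcases hchain.total Y₁.2 Y₂.2 with hle | hle
      · exact ⟨Y₁, le_refl _, hle⟩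
      · exact ⟨Y₂, hle, le_refl _⟩
    have hne' : ∀ Y : c, (Y : Set X).Nonempty := fun Y => (hc Y.2).1
    have hclosed : ∀ Y : c, IsClosed (Y : Set X) := fun Y => (hc Y.2).2.1
    have hInter : (⋂ Y : c, (Y : Set X)).Nonempty :=
      IsCompact.nonempty_iInter_of_directed_nonempty_isCompact_isClosed _
        hdir hne' (fun Y => (hclosed Y).isCompact) hclosed
    have hsInter : ⋂₀ c = ⋂ Y : c, (Y : Set X) := Set.sInter_eq_iInter
    refine ⟨⋂₀ c, ⟨?_, ?_, ?_, ?_⟩, fun s hs => Set.sInter_subset_of_mem hs⟩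
    · rw [hsInter]; exact hInter
    · exact isClosed_sInter fun Y hY => (hc hY).2.1
    · rw [hsInter, Set.image_iInter h.bijective]
      exact Set.iInter_congr fun Y => (hc Y.2).2.2.1
    · obtain ⟨Y, hY⟩ := hcne
      exact (Set.sInter_subset_of_mem hY).trans (hc hY).2.2.2
  obtain ⟨m, hmS, hmem, hmin⟩ := zorn_superset_nonempty 𝒮 key S ⟨hne, hcl, hinv, le_refl _⟩
  refine ⟨m, hmem.2.2.2, hmem.1, hmem.2.1, hmem.2.2.1, ?_⟩
  intro W hWm hWne hWcl hWinv
  exact le_antisymm hWm (hmin ⟨hWne, hWcl, hWinv, hWm.trans hmem.2.2.2⟩ hWm)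

/-- blocks are unique -/
lemma block_eq {P : Set (Set X)} (hp : IsClopenPartition P) {Z W : Set X}
    (hZ : Z ∈ P) (hW : W ∈ P) {x : X} (hxZ : x ∈ Z) (hxW : x ∈ W) : Z = W := by
  by_contra hne
  exact Set.disjoint_left.mp (hp.2.2.1 hZ hW hne) hxZ hxW

lemma exists_block {P : Set (Set X)} (hp : IsClopenPartition P) (x : X) :
    ∃ Z ∈ P, x ∈ Z := by
  have : x ∈ ⋃₀ P := hp.2.2.2 ▸ Set.mem_univ x
  exact this


lemma refines_zpow (P : ℕ → Set (Set X))
    (href : ∀ n, Refines (P (n + 1)) (P n) ∧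
      Refines (P (n + 1)) (Set.image (⇑h) '' P n) ∧
      Refines (P (n + 1)) (Set.image (⇑h.symm) '' P n)) :
    ∀ k : ℕ, ∀ j : ℤ, j.natAbs ≤ k → ∀ m : ℕ, ∀ Z' ∈ P (m + k),
      ∃ W ∈ P m, Z' ⊆ ⇑(h.toEquiv ^ j) '' W := by
  intro k
  induction k with
  | zero =>
    intro j hj m Z' hZ'
    have hj0 : j = 0 := by omega
    subst hj0
    exact ⟨Z', hZ', by simp⟩
  | succ k ih =>
    intro j hj m Z' hZ'
    rw [← add_assoc] at hZ'
    by_cases hjk : j.natAbs ≤ k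
    · obtain ⟨Z'', hZ'', hsub⟩ := (href (m + k)).1 Z' hZ'
      obtain ⟨W, hW, hsub2⟩ := ih j hjk m Z'' hZ''
      exact ⟨W, hW, hsub.trans hsub2⟩
    · rcases Int.natAbs_eq j with hje | hje
      · -- j positive, j = k + 1
        obtain ⟨V', hV'mem, hsub⟩ := (href (m + k)).2.1 Z' hZ'
        obtain ⟨V, hV, rfl⟩ := hV'mem
        obtain ⟨W, hW, hsub2⟩ := ih (j - 1) (by omega) m V hV
        refine ⟨W, hW, ?_⟩
        have himg : ⇑(h.toEquiv ^ j) '' W = ⇑h '' (⇑(h.toEquiv ^ (j - 1)) '' W) := by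
          have hsplit : h.toEquiv ^ j = h.toEquiv * h.toEquiv ^ (j - 1) := by
            rw [← zpow_one_add]; ring_nf
          rw [hsplit, ← Set.image_comp]; rfl
        rw [himg]
        exact hsub.trans (Set.image_mono hsub2)
      · -- j negative, j = -(k + 1)
        obtain ⟨V', hV'mem, hsub⟩ := (href (m + k)).2.2 Z' hZ'
        obtain ⟨V, hV, rfl⟩ := hV'mem
        obtain ⟨W, hW, hsub2⟩ := ih (j + 1) (by omega) m V hV
        refine ⟨W, hW, ?_⟩
        have himg : ⇑(h.toEquiv ^ j) '' W = ⇑h.symm '' (⇑(h.toEquiv ^ (j + 1)) '' W) := by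
          have hsplit : h.toEquiv ^ j = h.toEquiv⁻¹ * h.toEquiv ^ (j + 1) := by
            rw [← zpow_neg_one, ← zpow_add]; ring_nf
          rw [hsplit, ← Set.image_comp]; rfl
        rw [himg]
        exact hsub.trans (Set.image_mono hsub2)

lemma mem_minimal (P : ℕ → Set (Set X)) (hpart : ∀ n, IsClopenPartition (P n))
    (hinter : ∀ x : X, ⋂₀ {W : Set X | ∃ n, W ∈ P n ∧ x ∈ W} = {x})
    {Zseq : ℕ → Set X} (hEM : PropEM h P Zseq) {x : X} (hx : x ∈ ⋂ i, Zseq i)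
    {Y : Set X} (hY : IsMinimalSet h Y) : x ∈ Y := by
  obtain ⟨hmem, hdec, hprop⟩ := hEM
  have hanti : Antitone Zseq := antitone_nat_of_succ_le hdec
  have hxall : ∀ i, x ∈ Zseq i := fun i => Set.mem_iInter.mp hx i
  have hne : ∀ i, (Y ∩ Zseq i).Nonempty := by
    intro i
    obtain ⟨n, hn⟩ := hprop i
    obtain ⟨y, hy⟩ := hY.1
    obtain ⟨Z', hZ', hyZ'⟩ := exists_block (hpart n) y
    obtain ⟨j, hj⟩ := hn Z' hZ'
    obtain ⟨z, hz, hzy⟩ := hj hyZ'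
    refine ⟨(h.toEquiv ^ (-j)) y, ?_, ?_⟩
    · rw [← image_zpow_eq h hY.2.2.1 (-j)]
      exact ⟨y, hy, rfl⟩
    · rw [← hzy, zpow_neg_apply]; exact hz
  have hclosed : ∀ i, IsClosed (Y ∩ Zseq i) := fun i =>
    hY.2.1.inter ((hpart i).2.1 _ (hmem i)).2.isClosed
  have hdir : Directed (· ⊇ ·) (fun i => Y ∩ Zseq i) := by
    have : Antitone (fun i => Y ∩ Zseq i) :=
      fun a b hab => Set.inter_subset_inter_right _ (hanti hab)
    exact this.directed_ge
  obtain ⟨w, hw⟩ :=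
    IsCompact.nonempty_iInter_of_directed_nonempty_isCompact_isClosed _
      hdir hne (fun i => (hclosed i).isCompact) hclosed
  have hwY : w ∈ Y := (Set.mem_iInter.mp hw 0).1
  have hwZ : ∀ i, w ∈ Zseq i := fun i => (Set.mem_iInter.mp hw i).2
  have hwx : w ∈ ({x} : Set X) := by
    rw [← hinter x]
    refine Set.mem_sInter.mpr fun W hW => ?_
    obtain ⟨n, hWn, hxW⟩ := hW
    have : W = Zseq n := block_eq (hpart n) hWn (hmem n) hxW (hxall n)
    rw [this]; exact hwZ n
  rw [Set.mem_singleton_iff] at hwx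
  rwa [hwx] at hwY

lemma minimal_eq {Y : Set X} (hY : IsMinimalSet h Y) {x : X} (hxY : x ∈ Y) :
    Y = closure (orb h x) := by
  have horb : orb h x ⊆ Y := by
    rintro y ⟨j, rfl⟩
    rw [← image_zpow_eq h hY.2.2.1 j]
    exact ⟨x, hxY, rfl⟩
  exact (hY.2.2.2 (closure (orb h x)) (closure_minimal horb hY.2.1)
    ⟨x, subset_closure (mem_orb_self h x)⟩ isClosed_closure
    (image_closure_orb h x)).symm

end Stmt19Aux

open Stmt19Aux

theorem stmt19 {X : Type*} [TopologicalSpace X] [CompactSpace X]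
    [TopologicalSpace.MetrizableSpace X] [TotallyDisconnectedSpace X]
    (h : X ≃ₜ X) (P : ℕ → Set (Set X))
    (hpart : ∀ n, IsClopenPartition (P n))
    (href : ∀ n, Refines (P (n + 1)) (P n) ∧
      Refines (P (n + 1)) (Set.image (⇑h) '' P n) ∧
      Refines (P (n + 1)) (Set.image (⇑h.symm) '' P n))
    (hinter : ∀ x : X, ⋂₀ {W : Set X | ∃ n, W ∈ P n ∧ x ∈ W} = {x}) :
    ((∃! Y : Set X, IsMinimalSet h Y) ↔ ∃ Zseq : ℕ → Set X, PropEM h P Zseq) ∧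
    ∀ Zseq : ℕ → Set X, PropEM h P Zseq → ∀ x : X, x ∈ ⋂ i, Zseq i →
      ∀ Y : Set X, IsMinimalSet h Y →
        Y = closure {y : X | ∃ j : ℤ, y = (h.toEquiv ^ j) x} := by
  have core : ∀ Zseq : ℕ → Set X, PropEM h P Zseq → ∀ x : X, x ∈ ⋂ i, Zseq i →
      ∀ Y : Set X, IsMinimalSet h Y →
        Y = closure {y : X | ∃ j : ℤ, y = (h.toEquiv ^ j) x} := by
    intro Zseq hEM x hx Y hY
    exact minimal_eq h hY (mem_minimal h P hpart hinter hEM hx hY)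
  refine ⟨⟨?_, ?_⟩, core⟩
  · -- forward: unique minimal set implies PropEM sequence
    rintro ⟨Y, hY, huniq⟩
    obtain ⟨x, hxY⟩ := hY.1
    choose Zb hZb hxZb using fun n => exists_block (hpart n) x
    refine ⟨Zb, hZb, ?_, ?_⟩
    · intro n
      obtain ⟨W, hW, hsub⟩ := (href n).1 _ (hZb (n + 1))
      have hWeq : W = Zb n := block_eq (hpart n) hW (hZb n) (hsub (hxZb (n + 1))) (hxZb n)
      rwa [hWeq] at hsub
    · intro i
      have hopen : IsOpen (Zb i) := ((hpart i).2.1 _ (hZb i)).2.isOpen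
      have hcov : ∀ z : X, ∃ j : ℤ, z ∈ ⇑(h.toEquiv ^ j) '' Zb i := by
        intro z
        obtain ⟨Y', hY'sub, hY'⟩ := exists_minimal h (closure (orb h z))
          ⟨z, subset_closure (mem_orb_self h z)⟩ isClosed_closure (image_closure_orb h z)
        have hYeq : Y' = Y := huniq Y' hY'
        have hxcl : x ∈ closure (orb h z) := hY'sub (hYeq ▸ hxY)
        obtain ⟨y, hyZ, j, rfl⟩ :=
          mem_closure_iff.mp hxcl (Zb i) hopen (hxZb i)
        exact ⟨-j, (h.toEquiv ^ j) z, hyZ, zpow_neg_apply h j z⟩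
      have hUopen : ∀ j : ℤ, IsOpen (⇑(h.toEquiv ^ j) '' Zb i) :=
        fun j => (isOpenMap_zpow h j) _ hopen
      have hcover : (Set.univ : Set X) ⊆ ⋃ j : ℤ, ⇑(h.toEquiv ^ j) '' Zb i :=
        fun z _ => Set.mem_iUnion.mpr (hcov z)
      obtain ⟨t, ht⟩ := isCompact_univ.elim_finite_subcover _ hUopen hcover
      refine ⟨i + t.sup Int.natAbs, ?_⟩
      intro Z' hZ'
      obtain ⟨z, hz⟩ := ((hpart _).2.1 _ hZ').1
      have hzmem : z ∈ ⋃ j ∈ t, ⇑(h.toEquiv ^ j) '' Zb i := ht (Set.mem_univ z)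
      rw [Set.mem_iUnion₂] at hzmem
      obtain ⟨j₀, hj₀t, hzU⟩ := hzmem
      obtain ⟨W, hW, hsub⟩ := refines_zpow h P href (t.sup Int.natAbs) j₀
        (Finset.le_sup hj₀t) i Z' hZ'
      obtain ⟨u, hu, huz⟩ := hsub hz
      obtain ⟨v, hv, hvz⟩ := hzU
      have huv : u = v := by
        rw [← zpow_neg_apply h j₀ u, ← zpow_neg_apply h j₀ v, huz, hvz]
      have hWeq : W = Zb i := block_eq (hpart i) hW (hZb i) hu (huv ▸ hv)
      exact ⟨j₀, hWeq ▸ hsub⟩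
  · -- backward: PropEM sequence implies unique minimal set
    rintro ⟨Zseq, hEM⟩
    have hanti : Antitone Zseq := antitone_nat_of_succ_le hEM.2.1
    have hZcl : ∀ i, IsClosed (Zseq i) :=
      fun i => ((hpart i).2.1 _ (hEM.1 i)).2.isClosed
    have hZne : ∀ i, (Zseq i).Nonempty := fun i => ((hpart i).2.1 _ (hEM.1 i)).1
    obtain ⟨x, hx⟩ :=
      IsCompact.nonempty_iInter_of_directed_nonempty_isCompact_isClosed Zseq
        hanti.directed_ge hZne (fun i => (hZcl i).isCompact) hZcl
    obtain ⟨Y, -, hY⟩ := exists_minimal h Set.univ ⟨x, trivial⟩ isClosed_univ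
      (by rw [Set.image_univ]; exact h.surjective.range_eq)
    exact ⟨Y, hY, fun Y' hY' =>
      (core Zseq hEM x hx Y' hY').trans (core Zseq hEM x hx Y hY).symm⟩
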